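/- For every x in (0,1], if x ∈ [1/(2k+1), 1/(2k-1)) for some integer k ≥ 1, then applying the even Farey map F_e exactly k times to x equals the even Gauss map T_e applied to x. -/

import Mathlib

/-- The even Farey (Romik) map on [0,1]. -/
noncomputable def evenFarey (x : ℝ) : ℝ :=
  if x < 1/3 then x / (1 - 2*x)
  else if x < 1/2 then (1 - 2*x) / x
  else (2*x - 1) / x

/-- The even Gauss map on [0,1]. -/
noncomputable def evenGauss (x : ℝ) : ℝ :=
  if x = 0 then 0 else |1/x - 2 * (round (1/(2*x)) : ℤ)|

lemma round_one_of (r : ℝ) (h1 : 1/2 ≤ r) (h2 : r < 3/2) : round r = 1 := by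
  rw [round_eq]
  exact Int.floor_eq_iff.mpr ⟨by push_cast; linarith, by push_cast; linarith⟩

lemma evenGauss_step (x : ℝ) (h0 : 0 < x) (h3 : x < 1/3) :
    evenGauss (x / (1 - 2*x)) = evenGauss x := by
  have hd : 0 < 1 - 2*x := by linarith
  have hy : 0 < x / (1 - 2*x) := div_pos h0 hd
  unfold evenGauss
  rw [if_neg (ne_of_gt hy), if_neg (ne_of_gt h0)]
  have e1 : 1 / (2 * (x / (1 - 2*x))) = 1/(2*x) - 1 := by
    field_simp
  have e2 : 1 / (x / (1 - 2*x)) = 1/x - 2 := by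
    field_simp
  rw [e1, e2, show (1:ℝ)/(2*x) - 1 = 1/(2*x) - (1:ℤ) by push_cast; ring,
    round_sub_intCast]
  congr 1
  push_cast
  ring

lemma evenFarey_base (x : ℝ) (h1 : 1/3 ≤ x) (h2 : x < 1) :
    evenFarey x = evenGauss x := by
  have hx0 : 0 < x := lt_of_lt_of_le (by norm_num) h1
  rcases eq_or_lt_of_le h1 with heq | hlt
  · rw [← heq]
    have hr : round ((3:ℝ)/2) = 2 := by
      rw [round_eq]; norm_num
    norm_num [evenFarey, evenGauss]
  · have hr : round (1/(2*x)) = 1 := by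
      apply round_one_of
      · rw [le_div_iff₀ (by linarith)]; linarith
      · rw [div_lt_iff₀ (by linarith)]; linarith
    unfold evenFarey evenGauss
    rw [if_neg (ne_of_gt hx0), hr, if_neg (by linarith : ¬ x < 1/3)]
    push_cast
    by_cases h : x < 1/2
    · rw [if_pos h, abs_of_nonneg (by rw [sub_nonneg, le_div_iff₀ hx0]; linarith)]
      field_simp
    · rw [if_neg h, abs_of_nonpos (by rw [sub_nonpos, div_le_iff₀ hx0]; linarith)]
      field_simp
      ring

theorem evenFarey_iterate_eq_evenGauss (x : ℝ) (hx : x ∈ Set.Ioc (0:ℝ) 1)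
    (k : ℕ) (hk : 1 ≤ k)
    (hxk : x ∈ Set.Ico (1 / (2*(k:ℝ) + 1)) (1 / (2*(k:ℝ) - 1))) :
    evenFarey^[k] x = evenGauss x := by
  induction k, hk using Nat.le_induction generalizing x with
  
  | base =>
    obtain ⟨h1, h2⟩ := hxk
    norm_num at h1 h2
    rw [Function.iterate_one]
    exact evenFarey_base x h1 h2
  | succ k hk ih =>
    obtain ⟨h1, h2⟩ := hxk
    have hk1 : (1:ℝ) ≤ (k:ℝ) := by exact_mod_cast hk
    have hx0 : 0 < x := hx.1
    -- bounds on x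
    have hb1 : 1 ≤ (2*(k:ℝ) + 3) * x := by
      rw [div_le_iff₀ (by linarith)] at h1
      push_cast at h1 ⊢; linarith
    have hb2 : (2*(k:ℝ) + 1) * x < 1 := by
      rw [lt_div_iff₀ (by push_cast; linarith)] at h2
      push_cast at h2 ⊢; linarith
    have hx3 : x < 1/3 := by
      rw [lt_div_iff₀ (by norm_num)]
      nlinarith
    have hd : 0 < 1 - 2*x := by linarith
    set y := x / (1 - 2*x) with hy
    have hy0 : 0 < y := div_pos hx0 hd
    have hyl : 1 / (2*(k:ℝ) + 1) ≤ y := by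
      rw [div_le_div_iff₀ (by linarith) hd]
      nlinarith
    have hyr : y < 1 / (2*(k:ℝ) - 1) := by
      rw [div_lt_div_iff₀ hd (by linarith)]
      nlinarith
    have hy1 : y ≤ 1 := by
      have : 1 / (2*(k:ℝ) - 1) ≤ 1 := by
        rw [div_le_one (by linarith)]; linarith
      linarith
    have hstep : evenFarey x = y := by
      unfold evenFarey; rw [if_pos hx3]
    rw [Function.iterate_succ_apply, hstep,
      ih y ⟨hy0, hy1⟩ ⟨hyl, hyr⟩, hy, evenGauss_step x hx0 hx3]
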